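/- Let U be a real Hilbert space, W ⊆ U a closed subspace with orthogonal projection P_W and W^⊥ ≠ {0}, and V ⊆ U a nonzero finite-dimensional subspace with orthogonal projection P_V, such that V ∩ W^⊥ = {0}. Define β := inf{‖P_W v‖ : v ∈ V, ‖v‖ = 1}. Then β > 0, and sup{‖η‖ / ‖η − P_V η‖ : η ∈ W^⊥, η ≠ 0} = 1/β. -/

import Mathlib

set_option maxHeartbeats 1000000

open scoped RealInnerProductSpace

section aux

variable {U : Type*} [NormedAddCommGroup U] [InnerProductSpace ℝ U]

lemma aux_pyth (a b : U) (h : ⟪a, b⟫ = 0) : ‖a + b‖ ^ 2 = ‖a‖ ^ 2 + ‖b‖ ^ 2 := by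
  rw [norm_add_sq_real, h]; ring

lemma aux_min (V : Submodule ℝ U) [CompleteSpace V] (η m : U) (hm : m ∈ V) :
    ‖η - (V.orthogonalProjection η : U)‖ ≤ ‖η - m‖ := by
  have h : ⟪η - (V.orthogonalProjection η : U), (V.orthogonalProjection η : U) - m⟫ = 0 :=
    Submodule.starProjection_inner_eq_zero (K := V) η _ (Submodule.sub_mem V (Submodule.coe_mem _) hm)
  have h2 : ‖η - m‖ ^ 2 = ‖η - (V.orthogonalProjection η : U)‖ ^ 2
      + ‖(V.orthogonalProjection η : U) - m‖ ^ 2 := by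
    have := aux_pyth (η - (V.orthogonalProjection η : U)) ((V.orthogonalProjection η : U) - m) h
    rw [← this, sub_add_sub_cancel]
  nlinarith [norm_nonneg (η - m), norm_nonneg (η - (V.orthogonalProjection η : U)),
    sq_nonneg ‖(V.orthogonalProjection η : U) - m‖]

lemma aux_sq (W : Submodule ℝ U) [CompleteSpace W] (x : U) :
    ‖x‖ ^ 2 = ‖x - (W.orthogonalProjection x : U)‖ ^ 2 + ‖(W.orthogonalProjection x : U)‖ ^ 2 := by
  have h0 := Submodule.starProjection_inner_eq_zero (K := W) x _ (Submodule.coe_mem (W.orthogonalProjection x))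
  have := aux_pyth (x - (W.orthogonalProjection x : U)) ((W.orthogonalProjection x : U)) h0
  rwa [sub_add_cancel] at this

end aux

theorem stmt_13
    {U : Type*} [NormedAddCommGroup U] [InnerProductSpace ℝ U] [CompleteSpace U]
    (W : Submodule ℝ U) [CompleteSpace W] (hW : Wᗮ ≠ ⊥)
    (V : Submodule ℝ U) [FiniteDimensional ℝ V] (hV : V ≠ ⊥)
    (hVW : V ⊓ Wᗮ = ⊥) :
    0 < sInf {x : ℝ | ∃ v : U, v ∈ V ∧ ‖v‖ = 1 ∧
        x = ‖(W.orthogonalProjection v : U)‖} ∧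
    sSup {x : ℝ | ∃ η : U, η ∈ Wᗮ ∧ η ≠ 0 ∧
        x = ‖η‖ / ‖η - (V.orthogonalProjection η : U)‖} =
      1 / sInf {x : ℝ | ∃ v : U, v ∈ V ∧ ‖v‖ = 1 ∧
        x = ‖(W.orthogonalProjection v : U)‖} := by
  classical
  set S : Set ℝ := {x : ℝ | ∃ v : U, v ∈ V ∧ ‖v‖ = 1 ∧
      x = ‖(W.orthogonalProjection v : U)‖} with hSdef
  set T : Set ℝ := {x : ℝ | ∃ η : U, η ∈ Wᗮ ∧ η ≠ 0 ∧
      x = ‖η‖ / ‖η - (V.orthogonalProjection η : U)‖} with hTdef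
  -- S is the image of the unit sphere of V under a continuous map
  set f : V → ℝ := fun v => ‖(W.orthogonalProjection (v : U) : U)‖ with hfdef
  have hfc : Continuous f :=
    (continuous_subtype_val.comp
      ((W.orthogonalProjection).continuous.comp continuous_subtype_val)).norm
  have hSimg : S = f '' (Metric.sphere (0 : V) 1) := by
    ext x
    constructor
    · rintro ⟨v, hvV, hv1, rfl⟩
      exact ⟨⟨v, hvV⟩, by simpa [mem_sphere_zero_iff_norm] using hv1, rfl⟩
    · rintro ⟨v, hv, rfl⟩
      exact ⟨(v : U), v.2, by simpa [mem_sphere_zero_iff_norm] using hv, rfl⟩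
  have hne : (Metric.sphere (0 : V) 1).Nonempty := by
    obtain ⟨v, hv0⟩ := Submodule.exists_mem_ne_zero_of_ne_bot hV
    refine ⟨(‖v‖⁻¹ : ℝ) • ⟨v, hv0.1⟩, ?_⟩
    have hvn : (‖v‖ : ℝ) ≠ 0 := norm_ne_zero_iff.2 hv0.2
    rw [mem_sphere_zero_iff_norm, norm_smul]
    have hco : ‖(⟨v, hv0.1⟩ : V)‖ = ‖v‖ := rfl
    rw [hco, norm_inv, norm_norm, inv_mul_cancel₀ hvn]
  have hScpt : IsCompact S := by rw [hSimg]; exact (isCompact_sphere (0 : V) 1).image hfc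
  have hSne : S.Nonempty := by rw [hSimg]; exact hne.image f
  have hSbdd : BddBelow S := hScpt.bddBelow
  obtain ⟨v₀, hv₀V, hv₀1, hβeq⟩ := hScpt.sInf_mem hSne
  set β := sInf S with hβdef
  -- β > 0
  have hβpos : 0 < β := by
    rcases (hβeq ▸ norm_nonneg _ : (0:ℝ) ≤ β).lt_or_eq with h | h
    · exact h
    · exfalso
      have hz : (W.orthogonalProjection v₀ : U) = 0 := by
        rw [← norm_eq_zero, ← hβeq, ← h]
      have hv₀W : v₀ ∈ Wᗮ := Submodule.orthogonalProjectionOnto_eq_zero_iff.1 (by exact_mod_cast hz)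
      have : v₀ ∈ (⊥ : Submodule ℝ U) := hVW ▸ Submodule.mem_inf.2 ⟨hv₀V, hv₀W⟩
      rw [Submodule.mem_bot] at this
      rw [this] at hv₀1
      simp at hv₀1
  -- β ≤ 1
  have hβ1 : β ≤ 1 := by
    have h := aux_sq W v₀
    rw [hv₀1] at h
    nlinarith [norm_nonneg (v₀ - (W.orthogonalProjection v₀ : U)),
      norm_nonneg ((W.orthogonalProjection v₀ : U)), hβeq]
  -- key: β ‖v‖ ≤ ‖P_W v‖ for v ∈ V
  have key : ∀ v ∈ V, β * ‖v‖ ≤ ‖(W.orthogonalProjection v : U)‖ := by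
    intro v hv
    rcases eq_or_ne v 0 with rfl | hv0
    · simp
    · have hvpos : 0 < ‖v‖ := norm_pos_iff.2 hv0
      have hu : (‖v‖⁻¹ : ℝ) • v ∈ V := V.smul_mem _ hv
      have hun : ‖(‖v‖⁻¹ : ℝ) • v‖ = 1 := by
        rw [norm_smul, norm_inv, norm_norm, inv_mul_cancel₀ hvpos.ne']
      have hmem : ‖(W.orthogonalProjection ((‖v‖⁻¹ : ℝ) • v) : U)‖ ∈ S := ⟨_, hu, hun, rfl⟩
      have hle : β ≤ ‖(W.orthogonalProjection ((‖v‖⁻¹ : ℝ) • v) : U)‖ := csInf_le hSbdd hmem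
      have hsm : (W.orthogonalProjection ((‖v‖⁻¹ : ℝ) • v) : U)
          = (‖v‖⁻¹ : ℝ) • (W.orthogonalProjection v : U) := by
        rw [map_smul]; rfl
      rw [hsm, norm_smul, norm_inv, norm_norm, ← div_eq_inv_mul, le_div_iff₀ hvpos] at hle
      linarith [hle]
  -- distance lower bound: β ‖η‖ ≤ ‖η - P_V η‖ for η ∈ Wᗮ
  have hdist : ∀ η ∈ Wᗮ, β * ‖η‖ ≤ ‖η - (V.orthogonalProjection η : U)‖ := by
    intro η hη
    set v : U := (V.orthogonalProjection η : U) with hvdef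
    set r : U := η - v with hrdef
    have hvV : v ∈ V := Submodule.coe_mem _
    have hrv : ⟪r, v⟫ = 0 := Submodule.starProjection_inner_eq_zero (K := V) η v hvV
    have h1 : ⟪η, v⟫ = ‖v‖ ^ 2 := by
      have h' : ⟪r + v, v⟫ = ⟪v, v⟫ := by rw [inner_add_left, hrv, zero_add]
      rw [hrdef, sub_add_cancel] at h'
      rw [h', real_inner_self_eq_norm_sq]
    have h2 : ⟪η, (W.orthogonalProjection v : U)⟫ = 0 := by
      rw [real_inner_comm]
      exact (Submodule.mem_orthogonal W η).1 hη _ (Submodule.coe_mem _)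
    have h3 : ‖v‖ ^ 2 ≤ ‖η‖ * ‖v - (W.orthogonalProjection v : U)‖ := by
      have hin : ⟪η, v - (W.orthogonalProjection v : U)⟫ = ‖v‖ ^ 2 := by
        rw [inner_sub_right, h2, h1, sub_zero]
      calc ‖v‖ ^ 2 = ⟪η, v - (W.orthogonalProjection v : U)⟫ := hin.symm
        _ ≤ ‖η‖ * ‖v - (W.orthogonalProjection v : U)‖ := real_inner_le_norm _ _
    have h4 := aux_sq W v
    have h5 := key v hvV
    have h6 : ‖v‖ ^ 2 ≤ (1 - β ^ 2) * ‖η‖ ^ 2 := by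
      rcases eq_or_ne v 0 with h | h
      · rw [h, norm_zero]
        have h1b : (0:ℝ) ≤ 1 - β ^ 2 := by nlinarith [hβ1, hβpos]
        nlinarith [mul_nonneg h1b (sq_nonneg ‖η‖)]
      · have hvpos : 0 < ‖v‖ := norm_pos_iff.2 h
        have h3' : ‖v‖ ^ 2 * ‖v‖ ^ 2
            ≤ (‖η‖ * ‖v - (W.orthogonalProjection v : U)‖)
              * (‖η‖ * ‖v - (W.orthogonalProjection v : U)‖) :=
          mul_self_le_mul_self (sq_nonneg _) h3
        have h5' : (β * ‖v‖) * (β * ‖v‖) ≤ ‖(W.orthogonalProjection v : U)‖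
            * ‖(W.orthogonalProjection v : U)‖ :=
          mul_self_le_mul_self (by positivity) h5
        have hmain : ‖v‖ ^ 2 * ‖v‖ ^ 2 ≤ ‖v‖ ^ 2 * ((1 - β ^ 2) * ‖η‖ ^ 2) := by
          nlinarith [sq_nonneg ‖η‖, h3', h5', h4]
        exact le_of_mul_le_mul_left hmain (by positivity)
    have hpy : ‖η‖ ^ 2 = ‖r‖ ^ 2 + ‖v‖ ^ 2 := by
      have := aux_pyth r v hrv
      rw [hrdef, sub_add_cancel] at this
      exact this
    have h7 : (β * ‖η‖) ^ 2 ≤ ‖r‖ ^ 2 := by nlinarith [h6, hpy]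
    nlinarith [norm_nonneg r, mul_nonneg hβpos.le (norm_nonneg η), h7]
  -- upper bound for T
  have hub : ∀ x ∈ T, x ≤ 1 / β := by
    rintro x ⟨η, hη, hη0, rfl⟩
    have hηpos : 0 < ‖η‖ := norm_pos_iff.2 hη0
    have hd := hdist η hη
    have hrpos : 0 < ‖η - (V.orthogonalProjection η : U)‖ :=
      lt_of_lt_of_le (mul_pos hβpos hηpos) hd
    rw [div_le_div_iff₀ hrpos hβpos, one_mul]
    nlinarith [hd]
  -- witness attaining 1/β
  have hwit : ∃ x ∈ T, 1 / β ≤ x := by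
    rcases hβ1.lt_or_eq with hb1 | hb1
    · -- β < 1 : use η = v₀ - P_W v₀
      set w : U := (W.orthogonalProjection v₀ : U) with hwdef
      set η : U := v₀ - w with hηdef
      have hηW : η ∈ Wᗮ := Submodule.sub_starProjection_mem_orthogonal (K := W) v₀
      have hwn : ‖w‖ = β := hβeq.symm
      have hηsq : ‖η‖ ^ 2 = 1 - β ^ 2 := by
        have h := aux_sq W v₀
        rw [hv₀1, ← hwdef, ← hηdef, hwn] at h
        nlinarith [h]
      have hηpos : 0 < ‖η‖ := by nlinarith [norm_nonneg η, hηsq]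
      have hη0 : η ≠ 0 := norm_pos_iff.1 hηpos
      refine ⟨_, ⟨η, hηW, hη0, rfl⟩, ?_⟩
      have hvw : ⟪v₀, w⟫ = β ^ 2 := by
        have h0 : ⟪η, w⟫ = 0 := by
          rw [real_inner_comm]
          exact (Submodule.mem_orthogonal W η).1 hηW _ (Submodule.coe_mem _)
        have h' : ⟪η + w, w⟫ = ⟪w, w⟫ := by rw [inner_add_left, h0, zero_add]
        rw [hηdef, sub_add_cancel] at h'
        rw [h', real_inner_self_eq_norm_sq, hwn]
      have hmle : ‖η - (V.orthogonalProjection η : U)‖ ≤ β * ‖η‖ := by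
        have hm : ((1 - β ^ 2) : ℝ) • v₀ ∈ V := V.smul_mem _ hv₀V
        have h := aux_min V η _ hm
        have heq : η - ((1 - β ^ 2) : ℝ) • v₀ = (β ^ 2 : ℝ) • v₀ - w := by
          rw [hηdef]; module
        have hcalc : ‖η - ((1 - β ^ 2) : ℝ) • v₀‖ ^ 2 = (β * ‖η‖) ^ 2 := by
          rw [heq, norm_sub_sq_real, real_inner_smul_left, hvw, norm_smul, hwn]
          have : ‖(β ^ 2 : ℝ)‖ = β ^ 2 := abs_of_nonneg (sq_nonneg β)
          rw [this, hv₀1]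
          nlinarith [hηsq]
        have hn : ‖η - ((1 - β ^ 2) : ℝ) • v₀‖ = β * ‖η‖ := by
          nlinarith [norm_nonneg (η - ((1 - β ^ 2) : ℝ) • v₀), hcalc,
            mul_nonneg hβpos.le (norm_nonneg η)]
        linarith [h, hn]
      have hrpos : 0 < ‖η - (V.orthogonalProjection η : U)‖ :=
        lt_of_lt_of_le (mul_pos hβpos hηpos) (hdist η hηW)
      rw [div_le_div_iff₀ hβpos hrpos, one_mul]
      nlinarith [hmle]
    · -- β = 1
      obtain ⟨η, hηW, hη0⟩ : ∃ η, η ∈ Wᗮ ∧ η ≠ 0 := by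
        obtain ⟨η, h⟩ := Submodule.exists_mem_ne_zero_of_ne_bot hW
        exact ⟨η, h.1, h.2⟩
      refine ⟨_, ⟨η, hηW, hη0, rfl⟩, ?_⟩
      have hηpos : 0 < ‖η‖ := norm_pos_iff.2 hη0
      have hrle : ‖η - (V.orthogonalProjection η : U)‖ ≤ ‖η‖ := by
        simpa using aux_min V η 0 (Submodule.zero_mem V)
      have hrpos : 0 < ‖η - (V.orthogonalProjection η : U)‖ :=
        lt_of_lt_of_le (mul_pos hβpos hηpos) (hdist η hηW)
      rw [div_le_div_iff₀ hβpos hrpos, one_mul]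
      nlinarith [hrle, hb1]
  refine ⟨hβpos, ?_⟩
  obtain ⟨x, hxT, hxle⟩ := hwit
  exact le_antisymm (csSup_le ⟨x, hxT⟩ hub)
    (le_trans hxle (le_csSup ⟨1 / β, fun y hy => hub y hy⟩ hxT))
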